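/- Let q > 4 be a prime power, m ≥ 2, let μ1, μ2, μ3, μ4 be distinct elements of GF(q), let U = GF(q)^{2m} identified with V ⊗ W (V = GF(q)², W = GF(q)^m), and let Δ = {(e1 + μ_i e2) ⊗ w : 1 ≤ i ≤ 4, w ∈ W \ {0}}. For x ∈ U and i ∈ {1,2,3,4} let ℓ_i(x) = {α ∈ U : π_i(α) = π_i(x)}, where π_1, π_2 are the coordinates of the decomposition U = (⟨e1+μ1e2⟩⊗W) ⊕ (⟨e1+μ2e2⟩⊗W) and π_3, π_4 those of U = (⟨e1+μ3e2⟩⊗W) ⊕ (⟨e1+μ4e2⟩⊗W). Then every clique of size q^m in the Cayley graph Cay(U, Δ) equals ℓ_i(x) for some i ∈ {1,2,3,4} and x ∈ U. -/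

import Mathlib

open TensorProduct

section Key

variable {F : Type*} [Field F] [Fintype F] {m : ℕ}

omit [Fintype F] in
/-- Slope uniqueness: a nonzero vector of the form `(w, μ i • w)` determines `i`. -/
lemma slope_unique {μ : Fin 4 → F} (hμ : Function.Injective μ) {i j : Fin 4}
    {w w' : Fin m → F} (hw : w ≠ 0)
    (h : (w, μ i • w) = (w', μ j • w')) : i = j := by
  have h1 : w = w' := congrArg Prod.fst h
  have h2 : μ i • w = μ j • w' := congrArg Prod.snd h
  subst h1
  have : (μ i - μ j) • w = 0 := by rw [sub_smul, h2, sub_self]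
  rcases smul_eq_zero.1 this with h | h
  · exact hμ (sub_eq_zero.1 h)
  · exact absurd h hw

omit [Fintype F] in
/-- Triangle/parallel lemma: a triangle with slopes `i`, `j`, `k` where `j ≠ k`
has parallel sides. -/
lemma para {μ : Fin 4 → F} (hμ : Function.Injective μ)
    {i j k : Fin 4} {w1 w2 w3 : Fin m → F}
    (hjk : j ≠ k)
    (h : (w1, μ i • w1) - (w2, μ j • w2) = (w3, μ k • w3)) :
    ∃ t : F, w2 = t • w1 := by
  have h1 : w1 - w2 = w3 := congrArg Prod.fst h
  have h2 : μ i • w1 - μ j • w2 = μ k • w3 := congrArg Prod.snd h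
  rw [← h1, smul_sub] at h2
  have h3 : (μ j - μ k) • w2 = (μ i - μ k) • w1 := by
    rw [sub_smul, sub_smul]
    linear_combination (norm := module) -h2
  have hjk' : μ j - μ k ≠ 0 := sub_ne_zero.2 fun h => hjk (hμ h)
  refine ⟨(μ j - μ k)⁻¹ * (μ i - μ k), ?_⟩
  rw [mul_smul, ← h3, ← mul_smul, inv_mul_cancel₀ hjk', one_smul]

/-- The key combinatorial lemma, stated in `W × W` where `W = Fin m → F`. -/
lemma key (hm : 2 ≤ m) (μ : Fin 4 → F) (hμ : Function.Injective μ)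
    (D : Set ((Fin m → F) × (Fin m → F)))
    (hD : D.Pairwise fun u v => ∃ i w, w ≠ (0 : Fin m → F) ∧ u - v = (w, μ i • w))
    (hcard : D.ncard = Fintype.card F ^ m) :
    ∃ i x, D = {α | ∃ w, α - x = (w, μ i • w)} := by
  have hq2 : 1 < Fintype.card F := Fintype.one_lt_card
  have hbig : 1 < D.ncard := by
    rw [hcard]; exact Nat.one_lt_pow (by omega) hq2
  obtain ⟨a, ha⟩ := Set.nonempty_of_ncard_ne_zero (s := D) (by omega)
  obtain ⟨b, hb, hba⟩ := Set.exists_ne_of_one_lt_ncard hbig a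
  obtain ⟨i, w1, hw1, hbaeq⟩ := hD hb ha hba
  -- parallel claim
  have hpar : ∀ b' ∈ D, ∀ (i' : Fin 4) (wb : Fin m → F), wb ≠ 0 →
      b' - a = (wb, μ i' • wb) →
      ∀ d ∈ D, ∀ (l : Fin 4) (wd : Fin m → F), l ≠ i' → wd ≠ 0 →
      d - a = (wd, μ l • wd) → ∃ t : F, wd = t • wb := by
    intro b' hb' i' wb hwb hbeq d hd l wd hli hwd hdeq
    have hdb : d ≠ b' := by
      rintro rfl
      exact hli (slope_unique hμ hwd (hdeq.symm.trans hbeq))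
    obtain ⟨k, w3, hw3, hbd⟩ := hD hb' hd (Ne.symm hdb)
    have hbd' : (wb, μ i' • wb) - (wd, μ l • wd) = (w3, μ k • w3) := by
      rw [← hbeq, ← hdeq, sub_sub_sub_cancel_right, hbd]
    have hki : k ≠ i' := by
      rintro rfl
      have : (wd, μ l • wd) = (wb - w3, μ k • (wb - w3)) := by
        rw [← hdeq, smul_sub]
        have h4 : d - a = (b' - a) - (b' - d) := by abel
        rw [h4, hbeq, hbd, Prod.mk_sub_mk]
      exact hli (slope_unique hμ hwd this)
    have hkl : k ≠ l := by
      rintro rfl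
      have : (wb, μ i' • wb) = (w3 + wd, μ k • (w3 + wd)) := by
        rw [← hbeq, smul_add]
        have h4 : b' - a = (b' - d) + (d - a) := by abel
        rw [h4, hbd, hdeq, Prod.mk_add_mk]
      exact hli (slope_unique hμ hwb this).symm
    exact para hμ hkl.symm hbd'
  -- mixed cliques are impossible
  have hmix : ∀ c ∈ D, ∀ (j : Fin 4) (w2 : Fin m → F), j ≠ i → w2 ≠ 0 →
      c - a = (w2, μ j • w2) → False := by
    intro c hc j w2 hji hw2 hceq
    -- everything lies in a + span{w1} × span{w1}
    have hsub : D ⊆ (a + ·) '' ((fun p : F × F => (p.1 • w1, p.2 • w1)) '' Set.univ) := by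
      intro d hd
      rcases eq_or_ne d a with rfl | hda
      · exact ⟨(0•w1, 0•w1), ⟨(0,0), trivial, rfl⟩, by simp⟩
      obtain ⟨l, wd, hwd, hdeq⟩ := hD hd ha hda
      have hwd1 : ∃ t : F, wd = t • w1 := by
        rcases eq_or_ne l i with heq | hl
        · obtain ⟨t, ht⟩ := hpar c hc j w2 hw2 hceq d hd l wd (heq ▸ Ne.symm hji) hwd hdeq
          obtain ⟨s, hs⟩ := hpar b hb i w1 hw1 hbaeq c hc j w2 hji hw2 hceq
          exact ⟨t * s, by rw [ht, hs, smul_smul]⟩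
        · exact hpar b hb i w1 hw1 hbaeq d hd l wd hl hwd hdeq
      obtain ⟨t, ht⟩ := hwd1
      refine ⟨(t • w1, (μ l * t) • w1), ⟨(t, μ l * t), trivial, rfl⟩, ?_⟩
      have : d = a + (d - a) := by abel
      rw [this, hdeq, ht, mul_smul]
    -- cardinality bound
    have hinj : Function.Injective (fun p : F × F => (p.1 • w1, p.2 • w1)) := by
      intro p p' hpp
      have h1 : p.1 • w1 = p'.1 • w1 := congrArg Prod.fst hpp
      have h2 : p.2 • w1 = p'.2 • w1 := congrArg Prod.snd hpp
      have e1 : p.1 = p'.1 := by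
        by_contra hne
        exact hw1 (smul_eq_zero.1 (by rw [sub_smul, h1, sub_self]) |>.resolve_left
          (sub_ne_zero.2 hne))
      have e2 : p.2 = p'.2 := by
        by_contra hne
        exact hw1 (smul_eq_zero.1 (by rw [sub_smul, h2, sub_self]) |>.resolve_left
          (sub_ne_zero.2 hne))
      exact Prod.ext e1 e2
    have hcard2 : ((a + ·) '' ((fun p : F × F => (p.1 • w1, p.2 • w1)) '' Set.univ)).ncard
        = Fintype.card F ^ 2 := by
      rw [Set.ncard_image_of_injective _ (add_right_injective a),
        Set.ncard_image_of_injective _ hinj, Set.ncard_univ, Nat.card_eq_fintype_card,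
        Fintype.card_prod, sq]
    have hle : Fintype.card F ^ m ≤ Fintype.card F ^ 2 := by
      rw [← hcard, ← hcard2]
      exact Set.ncard_le_ncard hsub (Set.toFinite _)
    have hm2 : m = 2 := le_antisymm ((Nat.pow_le_pow_iff_right hq2).1 hle) hm
    have heq : D = (a + ·) '' ((fun p : F × F => (p.1 • w1, p.2 • w1)) '' Set.univ) :=
      Set.eq_of_subset_of_ncard_le hsub (by rw [hcard2, hcard, hm2]) (Set.toFinite _)
    -- now a + (0, w1) ∈ D gives a forbidden difference
    have hmem : a + ((0:F) • w1, (1:F) • w1) ∈ D := by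
      rw [heq]; exact ⟨((0:F) • w1, (1:F) • w1), ⟨(0,1), trivial, rfl⟩, rfl⟩
    have hne : a + ((0:F) • w1, (1:F) • w1) ≠ a := by
      simp only [zero_smul, one_smul]
      intro h
      have : ((0 : Fin m → F), w1) = 0 := by
        have := congrArg (· - a) h
        simpa using this
      exact hw1 (by simpa using congrArg Prod.snd this)
    obtain ⟨l, w, hw, hdiff⟩ := hD hmem ha hne
    have : w = 0 := by
      have h0 : a + ((0:F) • w1, (1:F) • w1) - a = ((0 : Fin m → F), w1) := by
        simp
      rw [h0] at hdiff
      exact (congrArg Prod.fst hdiff).symm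
    exact hw this
  -- pure case: everything has slope i from a
  have hsub : D ⊆ {α | ∃ w, α - a = (w, μ i • w)} := by
    intro d hd
    rcases eq_or_ne d a with rfl | hda
    · exact ⟨0, by simp; rfl⟩
    obtain ⟨l, wd, hwd, hdeq⟩ := hD hd ha hda
    rcases eq_or_ne l i with rfl | hl
    · exact ⟨wd, hdeq⟩
    · exact absurd (hmix d hd l wd hl hwd hdeq) id
  refine ⟨i, a, ?_⟩
  have hTinj : Function.Injective (fun w : Fin m → F => a + (w, μ i • w)) := by
    intro w w' h
    have := congrArg (fun p => (p - a).1) h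
    simpa using this
  have hT : {α | ∃ w, α - a = (w, μ i • w)}
      = (fun w : Fin m → F => a + (w, μ i • w)) '' Set.univ := by
    ext α
    constructor
    · rintro ⟨w, hwα⟩
      exact ⟨w, trivial, (sub_eq_iff_eq_add'.1 hwα).symm⟩
    · rintro ⟨w, -, rfl⟩
      exact ⟨w, add_sub_cancel_left a _⟩
  refine Set.eq_of_subset_of_ncard_le hsub ?_ (by rw [hT]; exact Set.toFinite _)
  rw [hT, Set.ncard_image_of_injective _ hTinj, Set.ncard_univ, Nat.card_eq_fintype_card,
    Fintype.card_fun, Fintype.card_fin, hcard]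

end Key

section Equiv

variable (F : Type*) [Field F] (m : ℕ)

noncomputable def tensorToProd :
    TensorProduct F (Fin 2 → F) (Fin m → F) →ₗ[F] (Fin m → F) × (Fin m → F) :=
  TensorProduct.lift (LinearMap.mk₂ F (fun v w => (v 0 • w, v 1 • w))
    (fun v v' w => by simp [add_smul, Prod.ext_iff])
    (fun c v w => by simp [Prod.ext_iff, mul_smul])
    (fun v w w' => by simp [smul_add, Prod.ext_iff])
    (fun c v w => by simp [Prod.ext_iff, smul_comm c]))

@[simp] lemma tensorToProd_tmul (v : Fin 2 → F) (w : Fin m → F) :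
    tensorToProd F m (v ⊗ₜ[F] w) = (v 0 • w, v 1 • w) := by
  simp [tensorToProd]

noncomputable def prodToTensor :
    (Fin m → F) × (Fin m → F) →ₗ[F] TensorProduct F (Fin 2 → F) (Fin m → F) :=
  LinearMap.coprod ((TensorProduct.mk F (Fin 2 → F) (Fin m → F)) ![1, 0])
    ((TensorProduct.mk F (Fin 2 → F) (Fin m → F)) ![0, 1])

noncomputable def tensorEquivProd :
    TensorProduct F (Fin 2 → F) (Fin m → F) ≃ₗ[F] (Fin m → F) × (Fin m → F) :=
  LinearEquiv.ofLinear (tensorToProd F m) (prodToTensor F m)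
    (by
      ext p <;>
      simp [prodToTensor, Prod.ext_iff])
    (by
      apply TensorProduct.ext'
      intro v w
      simp only [LinearMap.comp_apply, tensorToProd_tmul, LinearMap.id_apply, prodToTensor,
        LinearMap.coprod_apply, mk_apply]
      rw [tmul_smul, tmul_smul, smul_tmul', smul_tmul', ← add_tmul]
      congr 1
      funext j
      fin_cases j <;> simp)

lemma tensorEquivProd_tmul (c : F) (w : Fin m → F) :
    tensorEquivProd F m ((![(1 : F), 0] + c • ![(0 : F), 1]) ⊗ₜ[F] w) = (w, c • w) := by
  simp [tensorEquivProd, Prod.ext_iff]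

end Equiv

/-- Let `q > 4` be a prime power (here: the order of the finite field `F`), `m ≥ 2`,
and `μ₁, μ₂, μ₃, μ₄` distinct elements of `F`. Let
`Δ = {(e₁ + μᵢe₂) ⊗ w : 1 ≤ i ≤ 4, w ≠ 0}` in `U = F² ⊗ F^m`. Then every clique of
size `q^m` in the Cayley graph `Cay(U, Δ)` is one of the sets
`ℓᵢ(x) = {α : α − x ∈ ⟨e₁ + μᵢe₂⟩ ⊗ W}`. -/
theorem cliques_of_cayley_graph (F : Type*) [Field F] [Fintype F]
    (hq : 4 < Fintype.card F) (m : ℕ) (hm : 2 ≤ m)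
    (μ : Fin 4 → F) (hμ : Function.Injective μ)
    (Δ : Set (TensorProduct F (Fin 2 → F) (Fin m → F)))
    (hΔ : Δ = {t | ∃ (i : Fin 4) (w : Fin m → F), w ≠ 0 ∧
      t = (![(1 : F), 0] + μ i • ![(0 : F), 1]) ⊗ₜ[F] w})
    (C : Set (TensorProduct F (Fin 2 → F) (Fin m → F)))
    (hclique : C.Pairwise fun u v => u - v ∈ Δ)
    (hcard : C.ncard = Fintype.card F ^ m) :
    ∃ (i : Fin 4) (x : TensorProduct F (Fin 2 → F) (Fin m → F)),
      C = {α | ∃ w : Fin m → F,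
        α - x = (![(1 : F), 0] + μ i • ![(0 : F), 1]) ⊗ₜ[F] w} := by
  classical
  set e := tensorEquivProd F m with he
  set D := e '' C with hDdef
  have hDpair : D.Pairwise fun u v => ∃ i w, w ≠ (0 : Fin m → F) ∧ u - v = (w, μ i • w) := by
    rintro _ ⟨c1, hc1, rfl⟩ _ ⟨c2, hc2, rfl⟩ hne
    have hc12 : c1 ≠ c2 := fun h => hne (by rw [h])
    have hmemΔ := hclique hc1 hc2 hc12
    rw [hΔ] at hmemΔ
    obtain ⟨i, w, hw, hdiff⟩ := hmemΔ
    refine ⟨i, w, hw, ?_⟩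
    have hsub : e c1 - e c2 = e (c1 - c2) := (LinearMap.map_sub e.toLinearMap c1 c2).symm
    rw [hsub, hdiff, he, tensorEquivProd_tmul]
  have hDcard : D.ncard = Fintype.card F ^ m := by
    rw [hDdef, Set.ncard_image_of_injective _ e.injective, hcard]
  obtain ⟨i, x', hDx⟩ := key hm μ hμ D hDpair hDcard
  refine ⟨i, e.symm x', ?_⟩
  ext α
  constructor
  · intro hα
    have : e α ∈ D := ⟨α, hα, rfl⟩
    rw [hDx] at this
    obtain ⟨w, hw⟩ := this
    refine ⟨w, ?_⟩
    have h3 : e.symm (e α - x') = e.symm (e α) - e.symm x' :=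
      LinearMap.map_sub e.symm.toLinearMap _ _
    rw [hw, e.symm_apply_apply] at h3
    rw [← h3, LinearEquiv.symm_apply_eq, he, tensorEquivProd_tmul]
  · rintro ⟨w, hw⟩
    have h3 : e α - x' = (w, μ i • w) := by
      have h4 : e (α - e.symm x') = e α - e (e.symm x') :=
        LinearMap.map_sub e.toLinearMap _ _
      rw [hw, e.apply_symm_apply, he, tensorEquivProd_tmul] at h4
      exact h4.symm
    have hmem : e α ∈ D := by rw [hDx]; exact ⟨w, h3⟩
    rwa [hDdef, e.injective.mem_set_image] at hmem
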